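/- Let G be a group with subgroups H and K such that G = HK. Then for all x, y ∈ G, G = H^x K^y, where H^x = x⁻¹Hx and K^y = y⁻¹Ky. -/

import Mathlib

open Pointwise

theorem stmt_1 {G : Type*} [Group G] (H K : Subgroup G)
    (h : (H : Set G) * (K : Set G) = Set.univ) (x y : G) :
    ((H.map (MulAut.conj x⁻¹).toMonoidHom : Subgroup G) : Set G) *
      ((K.map (MulAut.conj y⁻¹).toMonoidHom : Subgroup G) : Set G) = Set.univ := by
  have hdecomp : ∀ w : G, ∃ a ∈ H, ∃ b ∈ K, a * b = w := by
    intro w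
    have : w ∈ (H : Set G) * (K : Set G) := by rw [h]; trivial
    rcases this with ⟨a, ha, b, hb, hab⟩
    exact ⟨a, ha, b, hb, hab⟩
  apply Set.eq_univ_of_forall
  intro g
  obtain ⟨h₀, hh₀, k₀, hk₀, he₀⟩ := hdecomp (x * y⁻¹)
  obtain ⟨h₁, hh₁, k₁, hk₁, he₁⟩ := hdecomp (h₀⁻¹ * (x * g * y⁻¹))
  refine ⟨x⁻¹ * (h₀ * h₁ * h₀⁻¹) * x, ?_, y⁻¹ * (k₀⁻¹ * k₁) * y, ?_, ?_⟩
  · exact ⟨h₀ * h₁ * h₀⁻¹, mul_mem (mul_mem hh₀ hh₁) (inv_mem hh₀), by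
      simp [MulAut.conj]⟩
  · exact ⟨k₀⁻¹ * k₁, mul_mem (inv_mem hk₀) hk₁, by
      simp [MulAut.conj]⟩
  · have : h₀ * h₁ * k₁ = x * g * y⁻¹ := by
      rw [mul_assoc, he₁]; group
    have h2 : h₀ * h₁ * h₀⁻¹ * (x * y⁻¹) * (k₀⁻¹ * k₁) = x * g * y⁻¹ := by
      rw [← he₀, ← this]; group
    calc x⁻¹ * (h₀ * h₁ * h₀⁻¹) * x * (y⁻¹ * (k₀⁻¹ * k₁) * y)
        = x⁻¹ * (h₀ * h₁ * h₀⁻¹ * (x * y⁻¹) * (k₀⁻¹ * k₁)) * y := by group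
      _ = g := by rw [h2]; group
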